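/- Let u, v, λ be positive real numbers and set h = 1/u + 1/v, g = 1/λ + u/(v(u+v+λ)) − h, and q = 1/(uv) − (v+λ)/(v(u+v+λ)²). Define for t > 0 the function R(t) = ( h²e^{2ut} + (h(g − t) − 1/(uv))e^{ut} + g/λ + q )/( h e^{ut} + g ). Then R is strictly monotonically increasing on (0, +∞). -/

import Mathlib

open Real Set

noncomputable def rBarT (u v lam : ℝ) (t : ℝ) : ℝ :=
  let h := 1 / u + 1 / v
  let g := 1 / lam + u / (v * (u + v + lam)) - h
  let q := 1 / (u * v) - (v + lam) / (v * (u + v + lam) ^ 2)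
  (h ^ 2 * Real.exp (2 * u * t) + (h * (g - t) - 1 / (u * v)) * Real.exp (u * t)
      + g / lam + q) / (h * Real.exp (u * t) + g)

noncomputable def hC (u v : ℝ) : ℝ := 1 / u + 1 / v
noncomputable def gC (u v lam : ℝ) : ℝ := 1 / lam + u / (v * (u + v + lam)) - hC u v
noncomputable def qC (u v lam : ℝ) : ℝ :=
  1 / (u * v) - (v + lam) / (v * (u + v + lam) ^ 2)
noncomputable def NF (u v lam t : ℝ) : ℝ :=
  hC u v ^ 2 * Real.exp (2 * u * t)
    + (hC u v * (gC u v lam - t) - 1 / (u * v)) * Real.exp (u * t)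
    + gC u v lam / lam + qC u v lam
noncomputable def DF (u v lam t : ℝ) : ℝ := hC u v * Real.exp (u * t) + gC u v lam
noncomputable def KF (u v lam t : ℝ) : ℝ :=
  hC u v * u * DF u v lam t ^ 2 - hC u v * DF u v lam t - u * gC u v lam * hC u v * t
    - gC u v lam / v - hC u v * u * (gC u v lam / lam + qC u v lam)

lemma rBarT_eq (u v lam : ℝ) : rBarT u v lam = fun t => NF u v lam t / DF u v lam t := rfl

lemma hC_pos {u v : ℝ} (hu : 0 < u) (hv : 0 < v) : 0 < hC u v := by
  unfold hC; positivity

lemma hg_sum_pos {u v lam : ℝ} (hu : 0 < u) (hv : 0 < v) (hlam : 0 < lam) :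
    0 < hC u v + gC u v lam := by
  have hs : 0 < u + v + lam := by linarith
  have : hC u v + gC u v lam = 1 / lam + u / (v * (u + v + lam)) := by
    unfold gC; ring
  rw [this]; positivity

lemma DF_pos {u v lam : ℝ} (hu : 0 < u) (hv : 0 < v) (hlam : 0 < lam)
    {t : ℝ} (ht : 0 ≤ t) : 0 < DF u v lam t := by
  have h1 : 1 ≤ Real.exp (u * t) := Real.one_le_exp (by positivity)
  have hh := hC_pos hu hv
  have hhg := hg_sum_pos hu hv hlam
  unfold DF
  nlinarith

lemma exp_ut_hasDeriv (u t : ℝ) :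
    HasDerivAt (fun t : ℝ => Real.exp (u * t)) (u * Real.exp (u * t)) t := by
  have h : HasDerivAt (fun t : ℝ => u * t) u t := by
    simpa using HasDerivAt.const_mul u (hasDerivAt_id t)
  exact h.exp.congr_deriv (by ring)

lemma DF_hasDeriv (u v lam t : ℝ) :
    HasDerivAt (DF u v lam) (hC u v * u * Real.exp (u * t)) t := by
  exact (((exp_ut_hasDeriv u t).const_mul (hC u v)).add_const (gC u v lam)).congr_deriv
    (by ring)

lemma NF_hasDeriv (u v lam t : ℝ) :
    HasDerivAt (NF u v lam)
      (hC u v ^ 2 * (2 * u) * Real.exp (2 * u * t)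
        + ((hC u v * (gC u v lam - t) - 1 / (u * v)) * u - hC u v) * Real.exp (u * t)) t := by
  have h1 : HasDerivAt (fun t : ℝ => 2 * u * t) (2 * u) t := by
    simpa using HasDerivAt.const_mul (2 * u) (hasDerivAt_id t)
  have e1 : HasDerivAt (fun t : ℝ => Real.exp (2 * u * t)) (Real.exp (2 * u * t) * (2 * u)) t :=
    h1.exp
  have e2 := exp_ut_hasDeriv u t
  have f1 : HasDerivAt (fun t : ℝ => hC u v * (gC u v lam - t) - 1 / (u * v)) (-hC u v) t := by
    have hsub : HasDerivAt (fun t : ℝ => gC u v lam - t) (-1) t := by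
      simpa using (hasDerivAt_id t).const_sub (gC u v lam)
    simpa using (hsub.const_mul (hC u v)).sub_const (1 / (u * v))
  have hfun : NF u v lam = fun x => (hC u v ^ 2 * Real.exp (2 * u * x)
      + (hC u v * (gC u v lam - x) - 1 / (u * v)) * Real.exp (u * x))
      + (gC u v lam / lam + qC u v lam) := by
    funext x; unfold NF; ring
  rw [hfun]
  refine (((e1.const_mul (hC u v ^ 2)).add (f1.mul e2)).add_const
    (gC u v lam / lam + qC u v lam)).congr_deriv ?_
  ring

lemma KF_hasDeriv (u v lam t : ℝ) :
    HasDerivAt (KF u v lam)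
      (u * hC u v * (2 * hC u v * u * Real.exp (u * t) - 1) * DF u v lam t) t := by
  have hd := DF_hasDeriv u v lam t
  have hlin : HasDerivAt (fun t : ℝ => u * gC u v lam * hC u v * t)
      (u * gC u v lam * hC u v) t := by
    simpa using HasDerivAt.const_mul (u * gC u v lam * hC u v) (hasDerivAt_id t)
  have h1 := ((hd.pow 2).const_mul (hC u v * u)).sub (hd.const_mul (hC u v))
  have h2 := (h1.sub hlin).sub_const
    (gC u v lam / v + hC u v * u * (gC u v lam / lam + qC u v lam))
  have hfun : KF u v lam = fun t => hC u v * u * DF u v lam t ^ 2 - hC u v * DF u v lam t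
      - u * gC u v lam * hC u v * t
      - (gC u v lam / v + hC u v * u * (gC u v lam / lam + qC u v lam)) := by
    funext t; unfold KF; ring
  rw [hfun]
  refine h2.congr_deriv ?_
  unfold DF
  push_cast
  ring

set_option maxHeartbeats 1600000 in
lemma num_identity (u v lam : ℝ) (hu : 0 < u) (hv : 0 < v) (hlam : 0 < lam) (t : ℝ) :
    (hC u v ^ 2 * (2 * u) * Real.exp (2 * u * t)
        + ((hC u v * (gC u v lam - t) - 1 / (u * v)) * u - hC u v) * Real.exp (u * t))
        * DF u v lam t
      - NF u v lam t * (hC u v * u * Real.exp (u * t))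
      = Real.exp (u * t) * KF u v lam t := by
  have hu' := hu.ne'
  have hv' := hv.ne'
  have hlam' := hlam.ne'
  have hs : 0 < u + v + lam := by linarith
  have hs' := hs.ne'
  have hexp2 : Real.exp (2 * u * t) = Real.exp (u * t) * Real.exp (u * t) := by
    rw [← Real.exp_add]; ring_nf
  simp only [NF, DF, KF, hC, gC, qC, hexp2]
  field_simp
  ring

set_option maxHeartbeats 1600000 in
lemma K0_eq (u v lam : ℝ) (hu : 0 < u) (hv : 0 < v) (hlam : 0 < lam) :
    KF u v lam 0
      = u * (u + v) ^ 2 * (2 * v + lam) / (v ^ 3 * lam * (u + v + lam) ^ 2) := by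
  have hu' := hu.ne'
  have hv' := hv.ne'
  have hlam' := hlam.ne'
  have hs : 0 < u + v + lam := by linarith
  have hs' := hs.ne'
  simp only [KF, DF, hC, gC, qC, mul_zero, Real.exp_zero]
  field_simp
  ring

theorem statement18 (u v lam : ℝ) (hu : 0 < u) (hv : 0 < v) (hlam : 0 < lam) :
    StrictMonoOn (rBarT u v lam) (Ioi 0) := by
  have hu' := hu.ne'
  have hv' := hv.ne'
  have hlam' := hlam.ne'
  have hs : 0 < u + v + lam := by linarith
  have hs' := hs.ne'
  have hh := hC_pos hu hv
  -- derivative of rBarT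
  have hRderiv : ∀ t : ℝ, 0 < t →
      HasDerivAt (rBarT u v lam)
        (Real.exp (u * t) * KF u v lam t / DF u v lam t ^ 2) t := by
    intro t ht
    have hne : DF u v lam t ≠ 0 := (DF_pos hu hv hlam ht.le).ne'
    have hdiv := (NF_hasDeriv u v lam t).div (DF_hasDeriv u v lam t) hne
    rw [rBarT_eq]
    refine hdiv.congr_deriv ?_
    rw [← num_identity u v lam hu hv hlam t]
  -- K is strictly monotone on [0, ∞)
  have hKmono : StrictMonoOn (KF u v lam) (Ici 0) := by
    apply strictMonoOn_of_deriv_pos (convex_Ici 0)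
    · exact fun x _ => ((KF_hasDeriv u v lam x).continuousAt).continuousWithinAt
    · intro x hx
      rw [interior_Ici] at hx
      rw [(KF_hasDeriv u v lam x).deriv]
      have hE : 1 ≤ Real.exp (u * x) := Real.one_le_exp (mul_nonneg hu.le (le_of_lt hx))
      have hDp := DF_pos hu hv hlam (le_of_lt hx)
      have hhu : hC u v * u = 1 + u / v := by unfold hC; field_simp
      have h2 : 0 < 2 * hC u v * u * Real.exp (u * x) - 1 := by
        have huv : 0 < u / v := by positivity
        nlinarith
      positivity
  -- K(0) > 0
  have hK0 : 0 < KF u v lam 0 := by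
    rw [K0_eq u v lam hu hv hlam]; positivity
  have hKpos : ∀ t : ℝ, 0 < t → 0 < KF u v lam t := by
    intro t ht
    have := hKmono (self_mem_Ici) (le_of_lt ht : (0:ℝ) ≤ t) ht
    linarith
  -- conclude
  apply strictMonoOn_of_deriv_pos (convex_Ioi 0)
  · exact fun x hx => ((hRderiv x hx).differentiableAt.continuousAt).continuousWithinAt
  · intro x hx
    rw [interior_Ioi] at hx
    rw [(hRderiv x hx).deriv]
    have := DF_pos hu hv hlam hx.le
    have := hKpos x hx
    positivity
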